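/- In the setting of the previous Frobenius-fixed-point lemma: for b_{n-1} ∈ V(W_{n-1}), the map φ : V(W_n)_{b_{n-1}} → V(W_n)_{φ(b_{n-1})} defined by φ(a_n) = F_W^{-1}-twist of σ_n ∘ a_n is a constant map on the fiber V(W_n)_{b_{n-1}} := {a_n ∈ V(W_n) : a_n reduces to b_{n-1}}. -/
import Mathlib


/-!
**STATEMENT 10.** In the setting of the Frobenius-fixed-point lemma: writing
`C_n = W_n[t_1,…,t_m]/I` and `σ_n(t_i) = t_i^p + p·f_i(t)`, the map
`φ : V(W_n)_{b_{n-1}} → V(W_n)_{φ(b_{n-1})}`, sending a point with coordinates `α` to the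
point with coordinates `t_i ↦ F_W⁻¹(α_i^p + p f_i(α))`, is constant on the fiber over a
point `b_{n-1} ∈ V(W_{n-1})`: its value mod `p^n` depends only on the `α_i` mod `p^{n-1}`.

Concretely: if `α ≡ β mod p^{n-1}` (componentwise) then
`F⁻¹(β_i^p + p f_i(β)) ≡ F⁻¹(α_i^p + p f_i(α)) mod p^n`.  (For the fibered statement the
relevant levels are `n ≥ 2`.)
-/

/-- `(x - y)^2` divides `x^m - y^m - m * y^(m-1) * (x - y)`. -/
private lemma sq_dvd_pow_sub_pow_sub {R : Type*} [CommRing R] (x y : R) (m : ℕ) :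
    (x - y) ^ 2 ∣ x ^ m - y ^ m - (m : R) * y ^ (m - 1) * (x - y) := by
  induction m with
  | zero => simp
  | succ k ih =>
    rcases Nat.eq_zero_or_pos k with hk | hk
    · subst hk; simp
    obtain ⟨e, he⟩ := ih
    refine ⟨x * e + (k : R) * y ^ (k - 1), ?_⟩
    have hy : y ^ (k - 1) * y = y ^ k := by
      rw [← pow_succ]; congr 1; omega
    have hthis : x ^ k - y ^ k = (x - y) ^ 2 * e + (k : R) * y ^ (k - 1) * (x - y) := by
      linear_combination he
    rw [Nat.add_sub_cancel]
    push_cast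
    linear_combination x * hthis + (k : R) * (x - y) * hy

theorem phi_constant_on_fiber (p : ℕ) (hp : p.Prime)
    (W : Type*) [CommRing W] (F : W ≃+* W)
    (hF : ∀ w : W, ∃ y : W, F w = w ^ p + (p : W) * y)
    (n m : ℕ) (hn : 2 ≤ n)
    (f : Fin m → MvPolynomial (Fin m) W)
    (α β : Fin m → W)
    (hcong : ∀ i, ∃ c : W, β i - α i = (p : W) ^ (n - 1) * c) :
    ∀ i, ∃ c : W,
      F.symm (β i ^ p + (p : W) * MvPolynomial.eval β (f i)) -
        F.symm (α i ^ p + (p : W) * MvPolynomial.eval α (f i)) = (p : W) ^ n * c := by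
  intro i
  rw [← dvd_def, ← map_sub]
  have hpn : (p : W) ^ n = (p : W) * (p : W) ^ (n - 1) := by
    conv_lhs => rw [show n = 1 + (n - 1) by omega]
    rw [pow_add, pow_one]
  -- reduce to divisibility before applying F.symm
  have hsymm : ∀ z : W, (p : W) ^ n ∣ z → (p : W) ^ n ∣ F.symm z := by
    intro z ⟨c, hc⟩
    refine ⟨F.symm c, ?_⟩
    rw [hc, map_mul, map_pow, map_natCast]
  apply hsymm
  -- p^(n-1) divides β j - α j for all j
  have hdvd : ∀ j, (p : W) ^ (n - 1) ∣ β j - α j := by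
    intro j; obtain ⟨c, hc⟩ := hcong j; exact ⟨c, hc⟩
  -- Part 1 : p^n ∣ β i ^ p - α i ^ p
  have h1 : (p : W) ^ n ∣ β i ^ p - α i ^ p := by
    obtain ⟨e, he⟩ := sq_dvd_pow_sub_pow_sub (β i) (α i) p
    obtain ⟨c, hc⟩ := hdvd i
    have h2n : (p : W) ^ (2 * (n - 1)) ∣ (β i - α i) ^ 2 * e := by
      refine ⟨c ^ 2 * e, ?_⟩
      rw [hc, mul_pow, ← pow_mul, Nat.mul_comm]
      ring
    have hle : n ≤ 2 * (n - 1) := by omega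
    have h2n' : (p : W) ^ n ∣ (β i - α i) ^ 2 * e := dvd_trans (pow_dvd_pow _ hle) h2n
    have hfirst : (p : W) ^ n ∣ (p : W) * α i ^ (p - 1) * (β i - α i) := by
      refine ⟨α i ^ (p - 1) * c, ?_⟩
      rw [hc, hpn]; ring
    have : β i ^ p - α i ^ p =
        ((p : W) * α i ^ (p - 1) * (β i - α i)) + (β i - α i) ^ 2 * e := by
      linear_combination he
    rw [this]
    exact dvd_add hfirst h2n'
  -- Part 2 : p^(n-1) ∣ eval β (f i) - eval α (f i)
  have h2 : (p : W) ^ (n - 1) ∣ MvPolynomial.eval β (f i) - MvPolynomial.eval α (f i) := by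
    set I : Ideal W := Ideal.span {(p : W) ^ (n - 1)} with hI
    have hmem : ∀ j, β j - α j ∈ I := fun j =>
      Ideal.mem_span_singleton.2 (hdvd j)
    rw [← Ideal.mem_span_singleton]
    have : ∀ (g : MvPolynomial (Fin m) W),
        MvPolynomial.eval β g - MvPolynomial.eval α g ∈ I := by
      intro g
      induction g using MvPolynomial.induction_on with
      | C a => simp
      | add g₁ g₂ h₁ h₂ =>
        have := I.add_mem h₁ h₂
        simpa [sub_add_sub_comm] using this
      | mul_X g j hg =>
        have : MvPolynomial.eval β (g * MvPolynomial.X j) -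
            MvPolynomial.eval α (g * MvPolynomial.X j) =
            (MvPolynomial.eval β g - MvPolynomial.eval α g) * β j +
              MvPolynomial.eval α g * (β j - α j) := by
          simp only [map_mul, MvPolynomial.eval_X]
          ring
        rw [this]
        exact I.add_mem (I.mul_mem_right _ hg) (I.mul_mem_left _ (hmem j))
    exact this (f i)
  have h2' : (p : W) ^ n ∣
      (p : W) * (MvPolynomial.eval β (f i) - MvPolynomial.eval α (f i)) := by
    obtain ⟨c, hc⟩ := h2
    exact ⟨c, by rw [hc, hpn, mul_assoc]⟩
  have : β i ^ p + (p : W) * MvPolynomial.eval β (f i) -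
      (α i ^ p + (p : W) * MvPolynomial.eval α (f i)) =
      (β i ^ p - α i ^ p) +
        (p : W) * (MvPolynomial.eval β (f i) - MvPolynomial.eval α (f i)) := by ring
  rw [this]
  exact dvd_add h1 h2'
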